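/- Let p be a prime and M a module over S₂ = ℤ[s,t]/((1 − s)(1 − t), N(s) + N(t) − p). The following are equivalent: (1) multiplication by p is invertible on M; (2) im(1 − t^M) = ker(1 − s^M), im(1 − s^M) = ker(1 − t^M), and M = ker(1 − s^M) ⊕ ker(1 − t^M); (3) (1 − s^M) restricts to an invertible map on ker(1 − t^M) and (1 − t^M) restricts to an invertible map on ker(1 − s^M). -/

import Mathlib

open Finset

lemma geom_binom {R : Type*} [Ring R] (x : R) (n : ℕ) :
    ∑ j ∈ range n, (1 - x) ^ j
      = ∑ k ∈ range n, ((-1 : ℤ) ^ k * (n.choose (k+1) : ℤ)) • x ^ k := by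
  induction n with
  | zero => simp
  | succ n ih =>
    have hbin : (1 - x) ^ n
        = ∑ k ∈ range (n+1), ((-1:ℤ)^k * (n.choose k : ℤ)) • x ^ k := by
      have h := (Commute.one_right (-x)).add_pow n
      rw [neg_add_eq_sub] at h
      rw [h]
      refine sum_congr rfl fun k hk => ?_
      rw [one_pow, mul_one, neg_pow, zsmul_eq_mul]
      push_cast
      rw [mul_assoc, ← (Nat.cast_commute (n.choose k) (x^k)).eq, ← mul_assoc]
    rw [sum_range_succ, ih, hbin]
    have hsplit : ∀ k, ((-1 : ℤ) ^ k * ((n+1).choose (k+1) : ℤ)) • x ^ k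
        = ((-1:ℤ)^k * (n.choose (k+1) : ℤ)) • x ^ k + ((-1:ℤ)^k * (n.choose k : ℤ)) • x ^ k := by
      intro k
      rw [← add_smul, ← mul_add, ← Nat.cast_add]
      rw [Nat.choose_succ_succ' n k]  -- maybe (n+1).choose (k+1) = n.choose k + n.choose (k+1)?
      push_cast; ring_nf
    calc ∑ k ∈ range n, ((-1:ℤ)^k * (n.choose (k+1) : ℤ)) • x ^ k
          + ∑ k ∈ range (n+1), ((-1:ℤ)^k * (n.choose k : ℤ)) • x ^ k
        = ∑ k ∈ range (n+1), ((-1:ℤ)^k * (n.choose (k+1) : ℤ)) • x ^ k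
          + ∑ k ∈ range (n+1), ((-1:ℤ)^k * (n.choose k : ℤ)) • x ^ k := by
          rw [sum_range_succ (fun k => ((-1:ℤ)^k * (n.choose (k+1) : ℤ)) • x ^ k)]
          simp [Nat.choose_succ_self]
      _ = ∑ k ∈ range (n+1), ((-1 : ℤ) ^ k * ((n+1).choose (k+1) : ℤ)) • x ^ k := by
          rw [← sum_add_distrib]
          exact (sum_congr rfl fun k _ => (hsplit k)).symm

lemma aux13 (p : ℕ) (hp : p.Prime) {M : Type*} [AddCommGroup M]
    (s t : AddMonoid.End M) (hcomm : s * t = t * s)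
    (hst : ((1 : AddMonoid.End M) - s) * ((1 : AddMonoid.End M) - t) = 0)
    (hN : (∑ j ∈ Finset.range p, s ^ j) + (∑ j ∈ Finset.range p, t ^ j) =
      (p : AddMonoid.End M)) :
    ∃ W : AddMonoid.End M,
      (∀ x, ((1:AddMonoid.End M) - t) (((1:AddMonoid.End M) - s) x) = 0) ∧
      (((1:AddMonoid.End M) - s) * W = W * ((1:AddMonoid.End M) - s)) ∧
      (((1:AddMonoid.End M) - t) * W = W * ((1:AddMonoid.End M) - t)) ∧
      (∀ x, (((1:AddMonoid.End M) - s) * W) x + (∑ j ∈ Finset.range p, s ^ j) x = p • x) ∧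
      (∀ x, ((1:AddMonoid.End M) - t) x = 0 → (((1:AddMonoid.End M) - s) * W) x = p • x) ∧
      (∀ x, ((1:AddMonoid.End M) - t) x = 0 →
        (∀ y, ((1:AddMonoid.End M) - t) y = 0 → ((1:AddMonoid.End M) - s) y = 0 → y = 0) →
        p • x = 0 → x = 0) ∧
      ((∀ y, ((1:AddMonoid.End M) - t) y = 0 →
          ∃ z, ((1:AddMonoid.End M) - t) z = 0 ∧ ((1:AddMonoid.End M) - s) z = y) →
        ∀ x, ((1:AddMonoid.End M) - t) x = 0 → ∃ c, p • c = x) := by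
  set u : AddMonoid.End M := 1 - s with hu
  set v : AddMonoid.End M := 1 - t with hv
  have hcst : Commute s t := hcomm
  have hcuv : Commute u v :=
    (Commute.one_right u).sub_right ((Commute.one_left t).sub_left hcst)
  have hvu : v * u = 0 := by rw [← hcuv.eq]; exact hst
  have item1 : ∀ x, v (u x) = 0 := fun x => by
    have h : (v * u) x = (0 : AddMonoid.End M) x := by rw [hvu]
    exact h
  have h1u : (1 : AddMonoid.End M) - u = s := sub_sub_cancel 1 s
  have hgeom : (∑ j ∈ range p, s ^ j)
      = ∑ k ∈ range p, ((-1:ℤ)^k * (p.choose (k+1) : ℤ)) • u ^ k := by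
    have h := geom_binom u p
    rwa [h1u] at h
  set W : AddMonoid.End M :=
    ∑ k ∈ range (p-1), ((-1:ℤ)^k * (p.choose (k+2) : ℤ)) • u ^ k with hW
  set G : AddMonoid.End M :=
    ∑ k ∈ range (p-2), ((-1:ℤ)^k * ((p.choose (k+2))/p : ℕ) : ℤ) • u ^ k with hG
  have hcuW : Commute u W := by
    rw [hW]
    exact Commute.sum_right _ _ _ fun k _ => (((Commute.refl u).pow_right k).smul_right _)
  have hcvW : Commute v W := by
    rw [hW]
    exact Commute.sum_right _ _ _ fun k _ => ((hcuv.symm.pow_right k).smul_right _)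
  have hpsucc : p - 1 + 1 = p := Nat.succ_pred_eq_of_pos hp.pos
  have hp2 : p - 2 + 1 = p - 1 := by have := hp.two_le; omega
  have huW : u * W = ∑ k ∈ range (p-1), ((-1:ℤ)^k * (p.choose (k+2) : ℤ)) • u^(k+1) := by
    rw [hW, mul_sum]
    refine sum_congr rfl fun k _ => ?_
    rw [mul_smul_comm, ← pow_succ']
  have hkey1 : (∑ j ∈ range p, s ^ j) = (p:ℤ) • (1 : AddMonoid.End M) - u * W := by
    rw [hgeom]
    conv_lhs => rw [← hpsucc, sum_range_succ']
    rw [hpsucc]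
    have h0 : ((-1:ℤ)^0 * (p.choose 1 : ℤ)) • (u^0 : AddMonoid.End M)
        = (p:ℤ) • (1 : AddMonoid.End M) := by simp
    rw [h0, huW, sub_eq_neg_add, ← Finset.sum_neg_distrib]
    congr 1
    refine sum_congr rfl fun k _ => ?_
    rw [← neg_smul]
    congr 1
    ring
  have item4 : ∀ x, (u * W) x + (∑ j ∈ range p, s ^ j) x = p • x := by
    intro x
    have h := DFunLike.congr_fun hkey1 x
    have h2 : ((p:ℤ) • (1 : AddMonoid.End M) - u * W) x = (p:ℤ) • x - (u*W) x := rfl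
    rw [h, h2, natCast_zsmul]
    abel
  have hNs0 : ∀ x, v x = 0 → (∑ j ∈ range p, s ^ j) x = 0 := by
    intro x hx
    have hsub : x - t x = 0 := hx
    have htx : t x = x := by rw [sub_eq_zero] at hsub; exact hsub.symm
    have htj : ∀ j, (t^j) x = x := by
      intro j; induction j with
      | zero => rfl
      | succ n ihn =>
        rw [pow_succ]
        show (t^n) (t x) = x
        rw [htx, ihn]
    have hNt : (∑ j ∈ range p, t ^ j) x = p • x := by
      rw [show (∑ j ∈ range p, t ^ j) x = ∑ j ∈ range p, (t ^ j) x from AddMonoidHom.finset_sum_apply _ _ _]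
      simp [htj]
    have hNboth : (∑ j ∈ range p, s ^ j) x + (∑ j ∈ range p, t ^ j) x = p • x :=
      DFunLike.congr_fun hN x
    rw [hNt] at hNboth
    have h0 : (∑ j ∈ range p, s ^ j) x + p • x = 0 + p • x := by rw [hNboth, zero_add]
    exact add_right_cancel h0
  have item5 : ∀ x, v x = 0 → (u * W) x = p • x := fun x hx => by
    have h := item4 x; rw [hNs0 x hx, add_zero] at h; exact h
  have hWsplit : W = (p:ℤ) • G + ((-1:ℤ)^(p-2)) • u^(p-2) := by
    rw [hW, ← hp2, sum_range_succ]
    congr 1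
    · rw [hG]; erw [smul_sum]
      refine sum_congr rfl fun k hk => ?_
      erw [smul_smul]
      congr 1
      have hk' : k + 2 < p := by
        have := mem_range.mp hk; have := hp.two_le; omega
      have hdvd : p ∣ p.choose (k+2) := hp.dvd_choose_self (by omega) hk'
      obtain ⟨d, hd⟩ := hdvd
      rw [hd, Nat.mul_div_cancel_left d hp.pos]
      push_cast; ring
    · have hpe : p - 2 + 2 = p := by have := hp.two_le; omega
      rw [hpe, Nat.choose_self]
      simp
  have hkey : ∀ x, v x = 0 →
      ((-1:ℤ)^(p-2)) • (u^(p-1) : AddMonoid.End M) x = p • x - p • u (G x) := by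
    intro x hx
    have h5 : u (W x) = p • x := item5 x hx
    rw [hWsplit] at h5
    have h6 : u ((p:ℤ) • (G x) + ((-1:ℤ)^(p-2)) • ((u^(p-2) : AddMonoid.End M) x)) = p • x := h5
    rw [map_add, map_zsmul, map_zsmul] at h6
    have h7 : u ((u^(p-2) : AddMonoid.End M) x) = (u^(p-1) : AddMonoid.End M) x := by
      rw [← hp2, pow_succ']; rfl
    rw [h7, natCast_zsmul] at h6
    exact eq_sub_of_add_eq' h6
  have hiter_inj : (∀ y, v y = 0 → u y = 0 → y = 0) →
      ∀ n, ∀ y, v y = 0 → (u^n) y = 0 → y = 0 := by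
    intro hinj n
    induction n with
    | zero => intro y _ h0; exact h0
    | succ n ihn =>
      intro y hy h0
      rw [pow_succ] at h0
      have h1 : (u^n) (u y) = 0 := h0
      exact hinj y hy (ihn (u y) (item1 y) h1)
  have item6 : ∀ x, v x = 0 → (∀ y, v y = 0 → u y = 0 → y = 0) → p • x = 0 → x = 0 := by
    intro x hx hinj hpx
    have hk := hkey x hx
    have hG0 : p • u (G x) = 0 := by
      rw [← map_nsmul, ← map_nsmul, hpx, map_zero, map_zero]
    rw [hpx, hG0, sub_zero] at hk
    have h8 : (u^(p-1) : AddMonoid.End M) x = 0 := by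
      have hc := congrArg (fun y : M => ((-1:ℤ)^(p-2)) • y) hk
      simpa [smul_smul, ← mul_pow, neg_mul_neg] using hc
    exact hiter_inj hinj (p-1) x hx h8
  have hiter_surj : (∀ y, v y = 0 → ∃ z, v z = 0 ∧ u z = y) →
      ∀ n, ∀ y, v y = 0 → ∃ z, v z = 0 ∧ (u^n) z = y := by
    intro hsurj n
    induction n with
    | zero => intro y hy; exact ⟨y, hy, rfl⟩
    | succ n ihn =>
      intro y hy
      obtain ⟨z, hz, hz2⟩ := ihn y hy
      obtain ⟨z', hz', hz'2⟩ := hsurj z hz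
      refine ⟨z', hz', ?_⟩
      rw [pow_succ]
      show (u^n) (u z') = y
      rw [hz'2, hz2]
  have item7 : (∀ y, v y = 0 → ∃ z, v z = 0 ∧ u z = y) →
      ∀ x, v x = 0 → ∃ c, p • c = x := by
    intro hsurj x hx
    have hvx' : v (((-1:ℤ)^(p-2)) • x) = 0 := by rw [map_zsmul, hx, smul_zero]
    obtain ⟨z, hz, hz2⟩ := hiter_surj hsurj (p-1) _ hvx'
    have hk := hkey z hz
    rw [hz2] at hk
    have hεε : ((-1:ℤ)^(p-2)) • (((-1:ℤ)^(p-2)) • x) = x := by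
      rw [smul_smul, ← mul_pow, neg_mul_neg, one_mul, one_pow, one_smul]
    rw [hεε] at hk
    refine ⟨z - u (G z), ?_⟩
    rw [smul_sub]
    exact hk.symm
  exact ⟨W, item1, hcuW.eq, hcvW.eq, item4, item5, item6, item7⟩


/-- Let `p` be a prime and `M` a module over
`S₂ = ℤ[s,t]/((1 − s)(1 − t), N(s) + N(t) − p)`, encoded as an abelian group with two commuting
endomorphisms `s`, `t` satisfying the two defining relations.  The following are equivalent:
(1) multiplication by `p` is invertible on `M`; (2) `im(1 − t) = ker(1 − s)`,
`im(1 − s) = ker(1 − t)` and `M = ker(1 − s) ⊕ ker(1 − t)` (internal direct sum, i.e. the two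
kernels are complementary subgroups); (3) `1 − s` restricts to an invertible map on
`ker(1 − t)` and `1 − t` restricts to an invertible map on `ker(1 − s)`. -/
theorem stmt13 (p : ℕ) (hp : p.Prime) {M : Type*} [AddCommGroup M]
    (s t : AddMonoid.End M) (hcomm : s * t = t * s)
    (hst : ((1 : AddMonoid.End M) - s) * ((1 : AddMonoid.End M) - t) = 0)
    (hN : (∑ j ∈ Finset.range p, s ^ j) + (∑ j ∈ Finset.range p, t ^ j) =
      (p : AddMonoid.End M)) :
    ((Function.Bijective fun x : M => p • x) ↔
      (AddMonoidHom.range ((1 : AddMonoid.End M) - t) =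
          AddMonoidHom.ker ((1 : AddMonoid.End M) - s) ∧
        AddMonoidHom.range ((1 : AddMonoid.End M) - s) =
          AddMonoidHom.ker ((1 : AddMonoid.End M) - t) ∧
        IsCompl (AddMonoidHom.ker ((1 : AddMonoid.End M) - s))
          (AddMonoidHom.ker ((1 : AddMonoid.End M) - t)))) ∧
    ((Function.Bijective fun x : M => p • x) ↔
      (Set.BijOn ⇑((1 : AddMonoid.End M) - s)
          (AddMonoidHom.ker ((1 : AddMonoid.End M) - t) : Set M)
          (AddMonoidHom.ker ((1 : AddMonoid.End M) - t) : Set M) ∧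
        Set.BijOn ⇑((1 : AddMonoid.End M) - t)
          (AddMonoidHom.ker ((1 : AddMonoid.End M) - s) : Set M)
          (AddMonoidHom.ker ((1 : AddMonoid.End M) - s) : Set M))) := by
  have hcst : Commute s t := hcomm
  have hcuv : Commute ((1:AddMonoid.End M) - s) ((1:AddMonoid.End M) - t) :=
    (Commute.one_right _).sub_right ((Commute.one_left t).sub_left hcst)
  have hst' : ((1:AddMonoid.End M) - t) * ((1:AddMonoid.End M) - s) = 0 := by
    rw [← hcuv.eq]; exact hst
  have hN' : (∑ j ∈ Finset.range p, t ^ j) + (∑ j ∈ Finset.range p, s ^ j) =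
      (p : AddMonoid.End M) := by rw [add_comm]; exact hN
  obtain ⟨W, imu, cWu, cWv, globs, onB, injB, surjB⟩ := aux13 p hp s t hcomm hst hN
  obtain ⟨W', imv, cW't, cW's, globt, onA, injA, surjA⟩ := aux13 p hp t s hcomm.symm hst' hN'
  have hglob : ∀ x : M, (((1:AddMonoid.End M) - s)*W) x + (((1:AddMonoid.End M) - t)*W') x
      = p • x := by
    intro x
    have h1 := globs x
    have h2 := globt x
    have h3 : (∑ j ∈ Finset.range p, s ^ j) x + (∑ j ∈ Finset.range p, t ^ j) x = p • x :=
      DFunLike.congr_fun hN x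
    have e1 : (((1:AddMonoid.End M) - s)*W) x
        = p • x - (∑ j ∈ Finset.range p, s ^ j) x := eq_sub_of_add_eq h1
    have e2 : (((1:AddMonoid.End M) - t)*W') x
        = p • x - (∑ j ∈ Finset.range p, t ^ j) x := eq_sub_of_add_eq h2
    rw [e1, e2, sub_add_sub_comm, h3]
    abel
  have h12 : (Function.Bijective fun x : M => p • x) →
      (AddMonoidHom.range ((1 : AddMonoid.End M) - t) =
          AddMonoidHom.ker ((1 : AddMonoid.End M) - s) ∧
        AddMonoidHom.range ((1 : AddMonoid.End M) - s) =
          AddMonoidHom.ker ((1 : AddMonoid.End M) - t) ∧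
        IsCompl (AddMonoidHom.ker ((1 : AddMonoid.End M) - s))
          (AddMonoidHom.ker ((1 : AddMonoid.End M) - t))) := by
    rintro ⟨hinj, hsurj⟩
    have hpinj : ∀ x : M, p • x = 0 → x = 0 := by
      intro x hx
      have h : (fun x : M => p • x) x = (fun x : M => p • x) 0 := by simpa using hx
      exact hinj h
    refine ⟨?_, ?_, ?_⟩
    · ext x
      show (∃ y, ((1:AddMonoid.End M) - t) y = x) ↔ ((1:AddMonoid.End M) - s) x = 0
      constructor
      · rintro ⟨y, rfl⟩; exact imv y
      · intro hx
        obtain ⟨y, hy⟩ := hsurj x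
        have hy' : p • y = x := hy
        refine ⟨W' y, ?_⟩
        have e : p • (((1:AddMonoid.End M) - t) (W' y)) = p • x := by
          rw [← map_nsmul ((1:AddMonoid.End M) - t), ← map_nsmul W', hy']
          exact onA x hx
        exact hinj e
    · ext x
      show (∃ y, ((1:AddMonoid.End M) - s) y = x) ↔ ((1:AddMonoid.End M) - t) x = 0
      constructor
      · rintro ⟨y, rfl⟩; exact imu y
      · intro hx
        obtain ⟨y, hy⟩ := hsurj x
        have hy' : p • y = x := hy
        refine ⟨W y, ?_⟩
        have e : p • (((1:AddMonoid.End M) - s) (W y)) = p • x := by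
          rw [← map_nsmul ((1:AddMonoid.End M) - s), ← map_nsmul W, hy']
          exact onB x hx
        exact hinj e
    · constructor
      · refine AddSubgroup.disjoint_def.mpr ?_
        intro a ha hb
        change ((1:AddMonoid.End M) - s) a = 0 at ha
        change ((1:AddMonoid.End M) - t) a = 0 at hb
        apply hpinj
        have h := hglob a
        have e1 : (((1:AddMonoid.End M) - s)*W) a = 0 := by
          rw [cWu]
          show W (((1:AddMonoid.End M) - s) a) = 0
          rw [ha, map_zero]
        have e2 : (((1:AddMonoid.End M) - t)*W') a = 0 := by
          rw [cW't]
          show W' (((1:AddMonoid.End M) - t) a) = 0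
          rw [hb, map_zero]
        rw [e1, e2, zero_add] at h
        exact h.symm
      · rw [codisjoint_iff, eq_top_iff]
        intro x _
        obtain ⟨y, hy⟩ := hsurj x
        rw [AddSubgroup.mem_sup]
        refine ⟨((1:AddMonoid.End M) - t) (W' y), AddMonoidHom.mem_ker.mpr (imv _),
          ((1:AddMonoid.End M) - s) (W y), AddMonoidHom.mem_ker.mpr (imu _), ?_⟩
        rw [add_comm]
        exact (hglob y).trans hy
  have h23 : (AddMonoidHom.range ((1 : AddMonoid.End M) - t) =
          AddMonoidHom.ker ((1 : AddMonoid.End M) - s) ∧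
        AddMonoidHom.range ((1 : AddMonoid.End M) - s) =
          AddMonoidHom.ker ((1 : AddMonoid.End M) - t) ∧
        IsCompl (AddMonoidHom.ker ((1 : AddMonoid.End M) - s))
          (AddMonoidHom.ker ((1 : AddMonoid.End M) - t))) →
      (Set.BijOn ⇑((1 : AddMonoid.End M) - s)
          (AddMonoidHom.ker ((1 : AddMonoid.End M) - t) : Set M)
          (AddMonoidHom.ker ((1 : AddMonoid.End M) - t) : Set M) ∧
        Set.BijOn ⇑((1 : AddMonoid.End M) - t)
          (AddMonoidHom.ker ((1 : AddMonoid.End M) - s) : Set M)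
          (AddMonoidHom.ker ((1 : AddMonoid.End M) - s) : Set M)) := by
    rintro ⟨hrv, hru, hcompl⟩
    have hsup : AddMonoidHom.ker ((1:AddMonoid.End M) - s) ⊔
        AddMonoidHom.ker ((1:AddMonoid.End M) - t) = ⊤ := codisjoint_iff.mp hcompl.codisjoint
    constructor
    · refine ⟨?_, ?_, ?_⟩
      · intro b _
        exact AddMonoidHom.mem_ker.mpr (imu b)
      · intro b1 h1 b2 h2 heq
        have hsub : ((1:AddMonoid.End M) - s) (b1 - b2) = 0 := by
          rw [map_sub, heq, sub_self]
        have hmem : b1 - b2 ∈ AddMonoidHom.ker ((1:AddMonoid.End M) - t) := sub_mem h1 h2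
        have h0 : b1 - b2 = 0 := AddSubgroup.disjoint_def.mp hcompl.disjoint
          (AddMonoidHom.mem_ker.mpr hsub) hmem
        exact sub_eq_zero.mp h0
      · intro b hb
        have hbr : b ∈ AddMonoidHom.range ((1:AddMonoid.End M) - s) := by rw [hru]; exact hb
        obtain ⟨x, hx⟩ := hbr
        have hxmem : x ∈ AddMonoidHom.ker ((1:AddMonoid.End M) - s) ⊔
            AddMonoidHom.ker ((1:AddMonoid.End M) - t) := by rw [hsup]; trivial
        rw [AddSubgroup.mem_sup] at hxmem
        obtain ⟨a, ha, b', hb', hab⟩ := hxmem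
        refine ⟨b', hb', ?_⟩
        have h' : ((1:AddMonoid.End M) - s) (a + b') = b := by rw [hab]; exact hx
        rw [map_add, (show ((1:AddMonoid.End M) - s) a = 0 from ha), zero_add] at h'
        exact h'
    · refine ⟨?_, ?_, ?_⟩
      · intro b _
        exact AddMonoidHom.mem_ker.mpr (imv b)
      · intro b1 h1 b2 h2 heq
        have hsub : ((1:AddMonoid.End M) - t) (b1 - b2) = 0 := by
          rw [map_sub, heq, sub_self]
        have hmem : b1 - b2 ∈ AddMonoidHom.ker ((1:AddMonoid.End M) - s) := sub_mem h1 h2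
        have h0 : b1 - b2 = 0 := AddSubgroup.disjoint_def.mp hcompl.disjoint
          hmem (AddMonoidHom.mem_ker.mpr hsub)
        exact sub_eq_zero.mp h0
      · intro b hb
        have hbr : b ∈ AddMonoidHom.range ((1:AddMonoid.End M) - t) := by rw [hrv]; exact hb
        obtain ⟨x, hx⟩ := hbr
        have hxmem : x ∈ AddMonoidHom.ker ((1:AddMonoid.End M) - s) ⊔
            AddMonoidHom.ker ((1:AddMonoid.End M) - t) := by rw [hsup]; trivial
        rw [AddSubgroup.mem_sup] at hxmem
        obtain ⟨a, ha, b', hb', hab⟩ := hxmem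
        refine ⟨a, ha, ?_⟩
        have h' : ((1:AddMonoid.End M) - t) (a + b') = b := by rw [hab]; exact hx
        rw [map_add, (show ((1:AddMonoid.End M) - t) b' = 0 from hb'), add_zero] at h'
        exact h'
  have h31 : (Set.BijOn ⇑((1 : AddMonoid.End M) - s)
          (AddMonoidHom.ker ((1 : AddMonoid.End M) - t) : Set M)
          (AddMonoidHom.ker ((1 : AddMonoid.End M) - t) : Set M) ∧
        Set.BijOn ⇑((1 : AddMonoid.End M) - t)
          (AddMonoidHom.ker ((1 : AddMonoid.End M) - s) : Set M)
          (AddMonoidHom.ker ((1 : AddMonoid.End M) - s) : Set M)) →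
      (Function.Bijective fun x : M => p • x) := by
    rintro ⟨hB, hA⟩
    have hinjB : ∀ y, ((1:AddMonoid.End M) - t) y = 0 → ((1:AddMonoid.End M) - s) y = 0 →
        y = 0 := by
      intro y hy h0
      refine hB.injOn hy ?_ ?_
      · show ((1:AddMonoid.End M) - t) (0:M) = 0
        exact map_zero _
      · rw [h0, map_zero]
    have hinjA : ∀ y, ((1:AddMonoid.End M) - s) y = 0 → ((1:AddMonoid.End M) - t) y = 0 →
        y = 0 := by
      intro y hy h0
      refine hA.injOn hy ?_ ?_
      · show ((1:AddMonoid.End M) - s) (0:M) = 0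
        exact map_zero _
      · rw [h0, map_zero]
    have hsurjB : ∀ y, ((1:AddMonoid.End M) - t) y = 0 →
        ∃ z, ((1:AddMonoid.End M) - t) z = 0 ∧ ((1:AddMonoid.End M) - s) z = y := by
      intro y hy
      obtain ⟨z, hz, hz2⟩ := hB.surjOn hy
      exact ⟨z, hz, hz2⟩
    have hsurjA : ∀ y, ((1:AddMonoid.End M) - s) y = 0 →
        ∃ z, ((1:AddMonoid.End M) - s) z = 0 ∧ ((1:AddMonoid.End M) - t) z = y := by
      intro y hy
      obtain ⟨z, hz, hz2⟩ := hA.surjOn hy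
      exact ⟨z, hz, hz2⟩
    have hdec : ∀ x : M, ∃ a b : M, ((1:AddMonoid.End M) - s) a = 0 ∧
        ((1:AddMonoid.End M) - t) b = 0 ∧ x = a + b := by
      intro x
      obtain ⟨z, hz, hz2⟩ := hsurjB (((1:AddMonoid.End M) - s) x) (imu x)
      refine ⟨x - z, z, ?_, hz, by abel⟩
      rw [map_sub, hz2, sub_self]
    have hpinj : ∀ x : M, p • x = 0 → x = 0 := by
      intro x hx
      obtain ⟨a, b, ha, hb, rfl⟩ := hdec x
      rw [smul_add] at hx
      have hpa_s : ((1:AddMonoid.End M) - s) (p • a) = 0 := by rw [map_nsmul, ha, smul_zero]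
      have hpb_t : ((1:AddMonoid.End M) - t) (p • b) = 0 := by rw [map_nsmul, hb, smul_zero]
      have hpa_t : ((1:AddMonoid.End M) - t) (p • a) = 0 := by
        have e : p • a = -(p • b) := eq_neg_of_add_eq_zero_left hx
        rw [e, map_neg, hpb_t, neg_zero]
      have hpb_s : ((1:AddMonoid.End M) - s) (p • b) = 0 := by
        have e : p • b = -(p • a) := eq_neg_of_add_eq_zero_right hx
        rw [e, map_neg, hpa_s, neg_zero]
      have hpa0 : p • a = 0 := hinjA _ hpa_s hpa_t
      have hpb0 : p • b = 0 := hinjB _ hpb_t hpb_s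
      have ha0 : a = 0 := injA a ha hinjA hpa0
      have hb0 : b = 0 := injB b hb hinjB hpb0
      rw [ha0, hb0, add_zero]
    constructor
    · intro x1 x2 h
      have h' : p • x1 = p • x2 := h
      have e : p • (x1 - x2) = 0 := by rw [smul_sub, h', sub_self]
      exact sub_eq_zero.mp (hpinj _ e)
    · intro x
      obtain ⟨a, b, ha, hb, rfl⟩ := hdec x
      obtain ⟨c, hc⟩ := surjA hsurjA a ha
      obtain ⟨d, hd⟩ := surjB hsurjB b hb
      exact ⟨c + d, by show p • (c + d) = a + b; rw [smul_add, hc, hd]⟩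
  exact ⟨⟨h12, fun h2 => h31 (h23 h2)⟩, ⟨fun h1 => h23 (h12 h1), h31⟩⟩
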